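/- Let y = x′β₀ + e be a regression model in ℝᵖ with finite second moments and E_{H₀}[x_j²] > 0, let λ ≥ 0, fix j ∈ {1,…,p} and (x₀, y₀), and let H_ε = (1 − ε)H₀ + ε·δ_{(x₀,y₀)}. Let β* : [0, δ) → ℝᵖ be differentiable at 0 and write β* = β*(0), IF(β*) = (β*)′(0), and ỹ⁽ʲ⁾ = y − (x⁽ʲ⁾)′(β*)⁽ʲ⁾, where z⁽ʲ⁾ deletes the j-th coordinate of z. Define the coordinate-descent update g(ε) = sign(m(ε))·max(|m(ε)|/s(ε) − λ/s(ε), 0), where m(ε) = E_{H_ε}[x_j·(y − (x⁽ʲ⁾)′(β*(ε))⁽ʲ⁾)] and s(ε) = E_{H_ε}[x_j²]. Then: (i) if |E_{H₀}[x_j·ỹ⁽ʲ⁾]| < λ, g is constantly 0 near 0, so g′(0) = 0; (ii) if |E_{H₀}[x_j·ỹ⁽ʲ⁾]| > λ, g is differentiable at 0 with g′(0) = (−E_{H₀}[x_j·(x⁽ʲ⁾)′·IF(β*)⁽ʲ⁾] + (y₀ − (x₀⁽ʲ⁾)′(β*)⁽ʲ⁾)·(x₀)_j)/E_{H₀}[x_j²]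 − E_{H₀}[x_j·ỹ⁽ʲ⁾]·(x₀)_j²/(E_{H₀}[x_j²])² − λ·(E_{H₀}[x_j²] − (x₀)_j²)/(E_{H₀}[x_j²])²·sign(E_{H₀}[x_j·ỹ⁽ʲ⁾]). -/

import Mathlib

open MeasureTheory ProbabilityTheory Matrix Filter

/-- Lemma 3 of the paper: influence function of one coordinate-descent
(soft-thresholding) update of the lasso at the contaminated distribution
`H_ε = (1-ε)H₀ + ε·δ_{(x₀,y₀)}`, where the previous value `β*(ε)` is right
differentiable at `0` with derivative `IF(β*)`. Deleting the j-th coordinate of a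
vector `v` is encoded as `Function.update v j 0` inside the dot products. -/
theorem influence_function_lasso_coordinate_descent
    {p : ℕ} {Ω : Type*} [MeasurableSpace Ω] (μ : Measure Ω) [IsProbabilityMeasure μ]
    (X : Ω → (Fin p → ℝ)) (e : Ω → ℝ) (hXm : Measurable X) (hem : Measurable e)
    (hind : IndepFun X e μ)
    (β₀ : Fin p → ℝ)
    (H₀ : Measure ((Fin p → ℝ) × ℝ))
    (hH₀ : H₀ = μ.map (fun ω => (X ω, X ω ⬝ᵥ β₀ + e ω)))
    (hxx : ∀ i i' : Fin p, Integrable (fun z : (Fin p → ℝ) × ℝ => z.1 i * z.1 i') H₀)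
    (hxy : ∀ i : Fin p, Integrable (fun z : (Fin p → ℝ) × ℝ => z.1 i * z.2) H₀)
    (hy2 : Integrable (fun z : (Fin p → ℝ) × ℝ => z.2 ^ 2) H₀)
    (lam : ℝ) (hlam : 0 ≤ lam)
    (j : Fin p) (x₀ : Fin p → ℝ) (y₀ : ℝ)
    (Ej : ℝ) (hEj : Ej = ∫ z, (z.1 j) ^ 2 ∂H₀) (hEjpos : 0 < Ej)
    (Hmix : ℝ → Measure ((Fin p → ℝ) × ℝ))
    (hHmix : ∀ ε : ℝ,
      Hmix ε = ENNReal.ofReal (1 - ε) • H₀ + ENNReal.ofReal ε • Measure.dirac (x₀, y₀))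
    (bstar : ℝ → (Fin p → ℝ)) (IFbstar : Fin p → ℝ)
    (hbstar : HasDerivWithinAt bstar IFbstar (Set.Ici 0) 0)
    (m s : ℝ → ℝ)
    (hm : ∀ ε : ℝ, m ε = ∫ z, z.1 j * (z.2 - z.1 ⬝ᵥ Function.update (bstar ε) j 0) ∂(Hmix ε))
    (hs : ∀ ε : ℝ, s ε = ∫ z, (z.1 j) ^ 2 ∂(Hmix ε))
    (g : ℝ → ℝ)
    (hg : ∀ ε : ℝ, g ε = Real.sign (m ε) * max (|m ε| / s ε - lam / s ε) 0)
    (mt : ℝ) (hmt : mt = ∫ z, z.1 j * (z.2 - z.1 ⬝ᵥ Function.update (bstar 0) j 0) ∂H₀) :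
    (|mt| < lam →
      (∀ᶠ ε in nhdsWithin (0 : ℝ) (Set.Ici 0), g ε = 0) ∧
        HasDerivWithinAt g 0 (Set.Ici 0) 0) ∧
    (lam < |mt| →
      HasDerivWithinAt g
        ((-(∫ z, z.1 j * (z.1 ⬝ᵥ Function.update IFbstar j 0) ∂H₀)
            + (y₀ - x₀ ⬝ᵥ Function.update (bstar 0) j 0) * x₀ j) / Ej
          - mt * (x₀ j) ^ 2 / Ej ^ 2
          - lam * (Ej - (x₀ j) ^ 2) / Ej ^ 2 * Real.sign mt)
        (Set.Ici 0) 0) := by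
  -- notation
  set lhs := nhdsWithin (0:ℝ) (Set.Ici 0) with hlhs
  set u : ℝ → Fin p → ℝ := fun ε => Function.update (bstar ε) j 0 with hu
  set uIF : Fin p → ℝ := Function.update IFbstar j 0 with huIF
  set Y : ℝ := ∫ z, z.1 j * z.2 ∂H₀ with hY
  set M : Fin p → ℝ := fun k => ∫ z, z.1 j * z.1 k ∂H₀ with hM
  -- rewriting of integrands
  have hfun : ∀ b : Fin p → ℝ, (fun z : (Fin p → ℝ) × ℝ => z.1 j * (z.2 - z.1 ⬝ᵥ b))
      = fun z => z.1 j * z.2 - ∑ k, b k * (z.1 j * z.1 k) := by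
    intro b; funext z
    simp only [dotProduct, mul_sub, Finset.mul_sum]
    congr 1
    exact Finset.sum_congr rfl fun k _ => by ring
  -- integrability of the partial-residual integrand
  have hint : ∀ b : Fin p → ℝ,
      Integrable (fun z : (Fin p → ℝ) × ℝ => z.1 j * (z.2 - z.1 ⬝ᵥ b)) H₀ := by
    intro b
    rw [hfun b]
    exact (hxy j).sub (integrable_finset_sum _ fun k _ => ((hxx j k).const_mul (b k)))
  -- linearity: value of the integral
  have hA : ∀ b : Fin p → ℝ,
      (∫ z, z.1 j * (z.2 - z.1 ⬝ᵥ b) ∂H₀) = Y - ∑ k, b k * M k := by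
    intro b
    rw [hfun b, integral_sub (hxy j)
      (integrable_finset_sum _ fun k _ => ((hxx j k).const_mul (b k))),
      integral_finset_sum _ fun k _ => ((hxx j k).const_mul (b k))]
    congr 1
    exact Finset.sum_congr rfl fun k _ => integral_const_mul _ _
  have hCval : (∫ z, z.1 j * (z.1 ⬝ᵥ uIF) ∂H₀) = ∑ k, uIF k * M k := by
    have : (fun z : (Fin p → ℝ) × ℝ => z.1 j * (z.1 ⬝ᵥ uIF))
        = fun z => ∑ k, uIF k * (z.1 j * z.1 k) := by
      funext z
      simp only [dotProduct, Finset.mul_sum]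
      exact Finset.sum_congr rfl fun k _ => by ring
    rw [this, integral_finset_sum _ fun k _ => ((hxx j k).const_mul (uIF k))]
    exact Finset.sum_congr rfl fun k _ => integral_const_mul _ _
  -- mixture integral formula
  have hmixint : ∀ ε : ℝ, ε ∈ Set.Icc (0:ℝ) 1 → ∀ f : (Fin p → ℝ) × ℝ → ℝ,
      Integrable f H₀ →
      ∫ z, f z ∂(Hmix ε) = (1 - ε) * ∫ z, f z ∂H₀ + ε * f (x₀, y₀) := by
    intro ε hε f hf
    have hdint : Integrable f (Measure.dirac (x₀, y₀)) :=
      (integrable_const (f (x₀, y₀))).congr (ae_eq_dirac f).symm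
    rw [hHmix ε, integral_add_measure
        (hf.smul_measure ENNReal.ofReal_ne_top)
        (hdint.smul_measure ENNReal.ofReal_ne_top),
      integral_smul_measure, integral_smul_measure, integral_dirac,
      ENNReal.toReal_ofReal (by linarith [hε.2]), ENNReal.toReal_ofReal hε.1]
    simp [smul_eq_mul]
  -- explicit formulas for m and s on [0,1]
  have hmform : ∀ ε : ℝ, ε ∈ Set.Icc (0:ℝ) 1 →
      m ε = (1 - ε) * (Y - ∑ k, u ε k * M k) + ε * (x₀ j * (y₀ - x₀ ⬝ᵥ u ε)) := by
    intro ε hε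
    rw [hm ε, hmixint ε hε _ (hint (u ε)), hA (u ε)]
  have hsform : ∀ ε : ℝ, ε ∈ Set.Icc (0:ℝ) 1 →
      s ε = (1 - ε) * Ej + ε * (x₀ j) ^ 2 := by
    intro ε hε
    have hsq : Integrable (fun z : (Fin p → ℝ) × ℝ => (z.1 j) ^ 2) H₀ := by
      simpa [sq] using hxx j j
    rw [hs ε, hmixint ε hε _ hsq, hEj]
  -- values at 0
  have hmt' : mt = Y - ∑ k, u 0 k * M k := by rw [hmt, hA]
  have hm0 : m 0 = mt := by
    rw [hmform 0 (by constructor <;> norm_num), hmt']; ring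
  have hs0 : s 0 = Ej := by
    rw [hsform 0 (by constructor <;> norm_num)]; ring
  -- eventually in nhdsWithin 0 (Ici 0), ε ∈ Icc 0 1
  have hevIcc : ∀ᶠ ε in lhs, ε ∈ Set.Icc (0:ℝ) 1 := by
    have h1 : Set.Iio (1:ℝ) ∈ lhs := nhdsWithin_le_nhds (Iio_mem_nhds (by norm_num))
    filter_upwards [h1, self_mem_nhdsWithin] with ε hε1 hε2
    exact ⟨hε2, le_of_lt hε1⟩
  -- derivative of coordinates of bstar
  have hbk : ∀ k, HasDerivWithinAt (fun ε => bstar ε k) (IFbstar k) (Set.Ici 0) 0 :=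
    hasDerivWithinAt_pi.mp hbstar
  have huk : ∀ k, HasDerivWithinAt (fun ε => u ε k) (uIF k) (Set.Ici 0) 0 := by
    intro k
    by_cases hk : k = j
    · subst hk
      simp only [hu, huIF, Function.update_self]
      exact hasDerivWithinAt_const 0 _ 0
    · simp only [hu, huIF, Function.update_of_ne hk]
      exact hbk k
  -- derivative of m
  set Dm : ℝ := -(Y - ∑ k, u 0 k * M k) - (∑ k, uIF k * M k)
      + x₀ j * (y₀ - x₀ ⬝ᵥ u 0) with hDm
  have hφ : HasDerivWithinAt
      (fun ε => (1 - ε) * (Y - ∑ k, u ε k * M k) + ε * (x₀ j * (y₀ - x₀ ⬝ᵥ u ε)))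
      Dm (Set.Ici 0) 0 := by
    have hsum : HasDerivWithinAt (fun ε => Y - ∑ k, u ε k * M k)
        (-(∑ k, uIF k * M k)) (Set.Ici 0) 0 := by
      have := HasDerivWithinAt.fun_sum (u := Finset.univ)
        (A := fun k ε => u ε k * M k) (A' := fun k => uIF k * M k)
        (fun k _ => (huk k).mul_const (M k))
      exact this.const_sub Y
    have hdot : HasDerivWithinAt (fun ε => x₀ ⬝ᵥ u ε) (x₀ ⬝ᵥ uIF) (Set.Ici 0) 0 := by
      simp only [dotProduct]
      exact HasDerivWithinAt.fun_sum fun k _ => (huk k).const_mul (x₀ k)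
    have h1 : HasDerivWithinAt (fun ε : ℝ => 1 - ε) (-1) (Set.Ici 0) 0 := by
      simpa using (hasDerivWithinAt_id (0:ℝ) (Set.Ici 0)).const_sub 1
    have h2 : HasDerivWithinAt (fun ε : ℝ => x₀ j * (y₀ - x₀ ⬝ᵥ u ε))
        (x₀ j * (-(x₀ ⬝ᵥ uIF))) (Set.Ici 0) 0 := (hdot.const_sub y₀).const_mul (x₀ j)
    have := (h1.mul hsum).add ((hasDerivWithinAt_id (0:ℝ) (Set.Ici 0)).mul h2)
    refine this.congr_deriv ?_
    simp only [hDm, id_eq]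
    ring
  have hmW : HasDerivWithinAt m Dm (Set.Ici 0) 0 := by
    refine hφ.congr_of_eventuallyEq ?_ ?_
    · filter_upwards [hevIcc] with ε hε
      exact hmform ε hε
    · exact hmform 0 (by constructor <;> norm_num)
  -- derivative of s
  have hsW : HasDerivWithinAt s ((x₀ j) ^ 2 - Ej) (Set.Ici 0) 0 := by
    have hψ : HasDerivWithinAt (fun ε : ℝ => (1 - ε) * Ej + ε * (x₀ j) ^ 2)
        ((x₀ j) ^ 2 - Ej) (Set.Ici 0) 0 := by
      have h1 : HasDerivWithinAt (fun ε : ℝ => 1 - ε) (-1) (Set.Ici 0) 0 := by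
        simpa using (hasDerivWithinAt_id (0:ℝ) (Set.Ici 0)).const_sub 1
      have := (h1.mul_const Ej).add
        ((hasDerivWithinAt_id (0:ℝ) (Set.Ici 0)).mul_const ((x₀ j) ^ 2))
      refine this.congr_deriv ?_
      ring
    refine hψ.congr_of_eventuallyEq ?_ ?_
    · filter_upwards [hevIcc] with ε hε
      exact hsform ε hε
    · exact hsform 0 (by constructor <;> norm_num)
  -- continuity facts
  have hmcont : Tendsto m lhs (nhds mt) := hm0 ▸ hmW.continuousWithinAt
  have hscont : Tendsto s lhs (nhds Ej) := hs0 ▸ hsW.continuousWithinAt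
  have hspos : ∀ᶠ ε in lhs, 0 < s ε := hscont.eventually_const_lt hEjpos
  constructor
  · -- case |mt| < lam
    intro hcase
    have habs : Tendsto (fun ε => |m ε|) lhs (nhds |mt|) := hmcont.abs
    have hmlt : ∀ᶠ ε in lhs, |m ε| < lam := habs.eventually_lt_const hcase
    have hzero : ∀ ε : ℝ, 0 < s ε → |m ε| < lam → g ε = 0 := by
      intro ε hsε hmε
      rw [hg ε, div_sub_div_same, max_eq_right
        (le_of_lt (div_neg_of_neg_of_pos (by linarith) hsε)), mul_zero]
    have hev : ∀ᶠ ε in lhs, g ε = 0 := by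
      filter_upwards [hspos, hmlt] with ε h1 h2
      exact hzero ε h1 h2
    refine ⟨hev, ?_⟩
    refine (hasDerivWithinAt_const (0:ℝ) (Set.Ici 0) (0:ℝ)).congr_of_eventuallyEq hev ?_
    exact hzero 0 (hs0 ▸ hEjpos) (hm0 ▸ hcase)
  · -- case lam < |mt|
    intro hcase
    have hEj0 : Ej ≠ 0 := ne_of_gt hEjpos
    -- the local form of g
    set h : ℝ → ℝ := fun ε => (m ε - lam * Real.sign mt) / s ε with hh
    have hd : HasDerivWithinAt h
        ((Dm * Ej - (mt - lam * Real.sign mt) * ((x₀ j) ^ 2 - Ej)) / Ej ^ 2)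
        (Set.Ici 0) 0 := by
      have := ((hmW.sub_const (lam * Real.sign mt)).div hsW (hs0 ▸ hEj0))
      rw [hs0, hm0] at this
      exact this
    -- identify the claimed derivative
    have hderiv_eq :
        ((-(∫ z, z.1 j * (z.1 ⬝ᵥ uIF) ∂H₀)
            + (y₀ - x₀ ⬝ᵥ u 0) * x₀ j) / Ej
          - mt * (x₀ j) ^ 2 / Ej ^ 2
          - lam * (Ej - (x₀ j) ^ 2) / Ej ^ 2 * Real.sign mt)
        = (Dm * Ej - (mt - lam * Real.sign mt) * ((x₀ j) ^ 2 - Ej)) / Ej ^ 2 := by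
      rw [hCval, hDm, hmt']
      field_simp
      ring
    rw [show (fun z : (Fin p → ℝ) × ℝ => z.1 j * (z.1 ⬝ᵥ Function.update IFbstar j 0))
        = fun z => z.1 j * (z.1 ⬝ᵥ uIF) from rfl,
      show Function.update (bstar 0) j 0 = u 0 from rfl, hderiv_eq]
    -- g agrees with h near 0 within Ici 0
    rcases lt_or_gt_of_ne (fun h0 : mt = 0 => by simp [h0] at hcase; linarith) with hneg | hpos
    · -- mt < 0
      have hsgn : Real.sign mt = -1 := Real.sign_of_neg hneg
      have hmev : ∀ᶠ ε in lhs, m ε < -lam := by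
        refine hmcont.eventually_lt_const ?_
        rw [abs_of_neg hneg] at hcase; linarith
      have hpt : ∀ ε : ℝ, 0 < s ε → m ε < -lam → g ε = h ε := by
        intro ε hsε hmε
        have hmneg : m ε < 0 := by linarith
        rw [hg ε, hh, Real.sign_of_neg hmneg, abs_of_neg hmneg, div_sub_div_same,
          max_eq_left (le_of_lt (div_pos (by linarith) hsε)), hsgn]
        field_simp
        ring
      refine hd.congr_of_eventuallyEq ?_ ?_
      · filter_upwards [hspos, hmev] with ε h1 h2
        exact hpt ε h1 h2
      · exact hpt 0 (hs0 ▸ hEjpos) (by rw [hm0]; rw [abs_of_neg hneg] at hcase; linarith)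
    · -- mt > 0
      have hsgn : Real.sign mt = 1 := Real.sign_of_pos hpos
      have hmev : ∀ᶠ ε in lhs, lam < m ε := by
        refine hmcont.eventually_const_lt ?_
        rwa [abs_of_pos hpos] at hcase
      have hpt : ∀ ε : ℝ, 0 < s ε → lam < m ε → g ε = h ε := by
        intro ε hsε hmε
        have hmpos : 0 < m ε := lt_of_le_of_lt hlam hmε
        rw [hg ε, hh, Real.sign_of_pos hmpos, abs_of_pos hmpos, div_sub_div_same,
          max_eq_left (le_of_lt (div_pos (by linarith) hsε)), hsgn, one_mul, mul_one]
      refine hd.congr_of_eventuallyEq ?_ ?_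
      · filter_upwards [hspos, hmev] with ε h1 h2
        exact hpt ε h1 h2
      · exact hpt 0 (hs0 ▸ hEjpos) (by rw [hm0]; rwa [abs_of_pos hpos] at hcase)
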